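/- Let 1 ≤ s ≤ N, 1 ≤ k ≤ m, λ > 0, and suppose A ∈ ℂ^{m×N} satisfies the ℓ²-robust null space property of order (s,k) with weight λ and constants ρ ∈ (0,1), τ > 0. Then there exist constants C₃, C₄ > 0 depending only on ρ and τ such that the following holds. If x ∈ ℂ^N, c ∈ ℂ^m, y ∈ ℂ^m and ε > 0 satisfy ‖Ax + c − y‖₂ ≤ ε, and (x̂, ĉ) is a minimizer of ‖z‖₁ + λ‖d‖₁ over pairs (z,d) ∈ ℂ^N × ℂ^m subject to ‖Az + d − y‖₂ ≤ ε, then ‖x − x̂‖₂ + ‖c − ĉ‖₂ ≤ C₃(1 + η^{1/4})·(σ_s(x)₁/√s + σ_k(c)₁/√k) + C₄(1 + η^{1/4})·ε, where η = (s + λ²k)/min{s, λ²k}. -/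

import Mathlib

open Finset Matrix MeasureTheory

noncomputable def l1norm {n : ℕ} (x : Fin n → ℂ) : ℝ := ∑ i, ‖x i‖

noncomputable def l2norm {n : ℕ} (x : Fin n → ℂ) : ℝ := Real.sqrt (∑ i, ‖x i‖ ^ 2)

/-- The vector equal to `x` on `S` and zero elsewhere. -/
def restr {n : ℕ} (x : Fin n → ℂ) (S : Finset (Fin n)) : Fin n → ℂ :=
  fun i => if i ∈ S then x i else 0

/-- `x` has at most `s` nonzero entries. -/
def IsSparse {n : ℕ} (s : ℕ) (x : Fin n → ℂ) : Prop :=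
  ∃ S : Finset (Fin n), S.card ≤ s ∧ ∀ i ∉ S, x i = 0

/-- Best `s`-term approximation error of `x` in the `ℓ¹` norm. -/
noncomputable def sigma1 {n : ℕ} (s : ℕ) (x : Fin n → ℂ) : ℝ :=
  sInf {t : ℝ | ∃ z : Fin n → ℂ, IsSparse s z ∧ t = l1norm (x - z)}

/-- `η_{s,k}(λ) = (s + λ²k)/min{s, λ²k}`. -/
noncomputable def etaSK (s k : ℕ) (lam : ℝ) : ℝ :=
  ((s : ℝ) + lam ^ 2 * k) / min (s : ℝ) (lam ^ 2 * k)

/-- The ℓ¹-robust null space property of order (s,k) with weight lam, constants ρ, τ. -/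
def L1RNSP {m N : ℕ} (A : Matrix (Fin m) (Fin N) ℂ) (s k : ℕ) (lam ρ τ : ℝ) : Prop :=
  ∀ (x : Fin N → ℂ) (c : Fin m → ℂ) (S : Finset (Fin N)) (T : Finset (Fin m)),
    S.card ≤ s → T.card ≤ k →
      l1norm (restr x S) + lam * l1norm (restr c T) ≤
        ρ * (l1norm (restr x Sᶜ) + lam * l1norm (restr c Tᶜ)) + τ * l2norm (A.mulVec x + c)

/-- The ℓ²-robust null space property of order (s,k) with weight lam, constants ρ, τ. -/
def L2RNSP {m N : ℕ} (A : Matrix (Fin m) (Fin N) ℂ) (s k : ℕ) (lam ρ τ : ℝ) : Prop :=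
  ∀ (x : Fin N → ℂ) (c : Fin m → ℂ) (S : Finset (Fin N)) (T : Finset (Fin m)),
    S.card ≤ s → T.card ≤ k →
      Real.sqrt (l2norm (restr x S) ^ 2 + l2norm (restr c T) ^ 2) ≤
        (ρ / Real.sqrt ((s : ℝ) + lam ^ 2 * k)) *
            (l1norm (restr x Sᶜ) + lam * l1norm (restr c Tᶜ)) +
          τ * l2norm (A.mulVec x + c)

/-- `A` satisfies the two-sided RIP inequality for the sparse corruptions problem of
order `(s,k)` with constant `δ`. -/
def RIPCor {m N : ℕ} (A : Matrix (Fin m) (Fin N) ℂ) (s k : ℕ) (δ : ℝ) : Prop :=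
  ∀ (x : Fin N → ℂ) (c : Fin m → ℂ), IsSparse s x → IsSparse k c →
    (1 - δ) * (l2norm x ^ 2 + l2norm c ^ 2) ≤ l2norm (A.mulVec x + c) ^ 2 ∧
      l2norm (A.mulVec x + c) ^ 2 ≤ (1 + δ) * (l2norm x ^ 2 + l2norm c ^ 2)

/-- `A` satisfies the RIP inequality for sparse vectors of order `s` with constant `δ`. -/
def RIPSparse {m N : ℕ} (A : Matrix (Fin m) (Fin N) ℂ) (s : ℕ) (δ : ℝ) : Prop :=
  ∀ x : Fin N → ℂ, IsSparse s x →
    (1 - δ) * l2norm x ^ 2 ≤ l2norm (A.mulVec x) ^ 2 ∧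
      l2norm (A.mulVec x) ^ 2 ≤ (1 + δ) * l2norm x ^ 2

/-- `(xh, ch)` is a minimizer of `‖z‖₁ + lam ‖d‖₁` subject to `‖Az + d - y‖₂ ≤ ε`. -/
def IsMinimizer {m N : ℕ} (A : Matrix (Fin m) (Fin N) ℂ) (y : Fin m → ℂ) (lam ε : ℝ)
    (xh : Fin N → ℂ) (ch : Fin m → ℂ) : Prop :=
  l2norm (A.mulVec xh + ch - y) ≤ ε ∧
    ∀ (z : Fin N → ℂ) (d : Fin m → ℂ), l2norm (A.mulVec z + d - y) ≤ ε →
      l1norm xh + lam * l1norm ch ≤ l1norm z + lam * l1norm d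

/-- Spectral norm of a matrix (operator norm w.r.t. Euclidean norms). -/
noncomputable def specNorm {a b : ℕ} (B : Matrix (Fin a) (Fin b) ℂ) : ℝ :=
  ‖LinearMap.toContinuousLinearMap (Matrix.toEuclideanLin B)‖

/-- `σ_{s,k}(A)`: the maximum spectral norm over `k × s` submatrices of `A`. -/
noncomputable def sigmaSK {m N : ℕ} (A : Matrix (Fin m) (Fin N) ℂ) (s k : ℕ) : ℝ :=
  sSup {t : ℝ | ∃ (S : Finset (Fin N)) (T : Finset (Fin m)) (hS : S.card = s) (hT : T.card = k),
    t = specNorm (A.submatrix (fun i : Fin k => ((T.orderIsoOfFin hT i : Fin m)))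
      (fun j : Fin s => ((S.orderIsoOfFin hS j : Fin N))))}

lemma l1norm_nonneg {n : ℕ} (x : Fin n → ℂ) : 0 ≤ l1norm x :=
  Finset.sum_nonneg fun _ _ => norm_nonneg _

lemma l1norm_add_le {n : ℕ} (x y : Fin n → ℂ) : l1norm (x + y) ≤ l1norm x + l1norm y := by
  rw [l1norm, l1norm, l1norm, ← Finset.sum_add_distrib]
  exact Finset.sum_le_sum fun i _ => norm_add_le _ _

lemma restr_add {n : ℕ} (x y : Fin n → ℂ) (S : Finset (Fin n)) :
    restr (x + y) S = restr x S + restr y S := by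
  funext i; by_cases h : i ∈ S <;> simp [restr, h]

lemma restr_add_compl {n : ℕ} (x : Fin n → ℂ) (S : Finset (Fin n)) :
    restr x S + restr x Sᶜ = x := by
  funext i; by_cases h : i ∈ S <;> simp [restr, h]

lemma l1norm_split {n : ℕ} (x : Fin n → ℂ) (S : Finset (Fin n)) :
    l1norm (restr x S) + l1norm (restr x Sᶜ) = l1norm x := by
  rw [l1norm, l1norm, l1norm, ← Finset.sum_add_distrib]
  refine Finset.sum_congr rfl fun i _ => ?_
  by_cases h : i ∈ S <;> simp [restr, h]

lemma l1norm_restr_le {n : ℕ} (x : Fin n → ℂ) (S : Finset (Fin n)) :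
    l1norm (restr x S) ≤ l1norm x := by
  have := l1norm_split x S
  have := l1norm_nonneg (restr x Sᶜ)
  linarith

lemma l1norm_restr_eq_sum {n : ℕ} (x : Fin n → ℂ) (S : Finset (Fin n)) :
    l1norm (restr x S) = ∑ i ∈ S, ‖x i‖ := by
  rw [l1norm]
  have : ∀ i, ‖restr x S i‖ = if i ∈ S then ‖x i‖ else 0 := by
    intro i; by_cases h : i ∈ S <;> simp [restr, h]
  simp_rw [this]
  rw [Finset.sum_ite_mem, Finset.univ_inter]

lemma l2norm_nonneg {n : ℕ} (x : Fin n → ℂ) : 0 ≤ l2norm x := Real.sqrt_nonneg _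

lemma l2norm_eq_norm {n : ℕ} (x : Fin n → ℂ) :
    l2norm x = ‖(WithLp.equiv 2 (Fin n → ℂ)).symm x‖ := by
  rw [EuclideanSpace.norm_eq]; rfl

lemma l2norm_add_le {n : ℕ} (x y : Fin n → ℂ) : l2norm (x + y) ≤ l2norm x + l2norm y := by
  rw [l2norm_eq_norm, l2norm_eq_norm, l2norm_eq_norm]
  exact norm_add_le _ _

lemma l2norm_neg {n : ℕ} (x : Fin n → ℂ) : l2norm (-x) = l2norm x := by
  rw [l2norm, l2norm]; simp

lemma l2norm_sq {n : ℕ} (x : Fin n → ℂ) : l2norm x ^ 2 = ∑ i, ‖x i‖ ^ 2 :=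
  Real.sq_sqrt (Finset.sum_nonneg fun _ _ => sq_nonneg _)

lemma l2norm_restr_sq {n : ℕ} (x : Fin n → ℂ) (S : Finset (Fin n)) :
    l2norm (restr x S) ^ 2 = ∑ i ∈ S, ‖x i‖ ^ 2 := by
  rw [l2norm_sq]
  have : ∀ i, ‖restr x S i‖ ^ 2 = if i ∈ S then ‖x i‖ ^ 2 else 0 := by
    intro i; by_cases h : i ∈ S <;> simp [restr, h]
  simp_rw [this]
  rw [Finset.sum_ite_mem, Finset.univ_inter]

lemma l2norm_le_split {n : ℕ} (x : Fin n → ℂ) (S : Finset (Fin n)) :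
    l2norm x ≤ l2norm (restr x S) + l2norm (restr x Sᶜ) := by
  conv_lhs => rw [← restr_add_compl x S]
  exact l2norm_add_le _ _

lemma l1norm_le_sqrt_card_mul {n : ℕ} (x : Fin n → ℂ) (S : Finset (Fin n)) :
    l1norm (restr x S) ≤ Real.sqrt S.card * l2norm (restr x S) := by
  have h1 : l1norm (restr x S) ^ 2 ≤ S.card * l2norm (restr x S) ^ 2 := by
    rw [l1norm_restr_eq_sum, l2norm_restr_sq]
    exact sq_sum_le_card_mul_sum_sq
  have h2 : 0 ≤ l1norm (restr x S) := l1norm_nonneg _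
  have h3 : Real.sqrt (l1norm (restr x S) ^ 2) ≤
      Real.sqrt ((S.card : ℝ) * l2norm (restr x S) ^ 2) := Real.sqrt_le_sqrt h1
  rwa [Real.sqrt_sq h2, Real.sqrt_mul (by positivity), Real.sqrt_sq (l2norm_nonneg _)] at h3

lemma cs2 {a b p q : ℝ} (ha : 0 ≤ a) (hb : 0 ≤ b) (hp : 0 ≤ p) (hq : 0 ≤ q) :
    a * p + b * q ≤ Real.sqrt (a ^ 2 + b ^ 2) * Real.sqrt (p ^ 2 + q ^ 2) := by
  have h1 : a * p + b * q = Real.sqrt ((a * p + b * q) ^ 2) :=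
    (Real.sqrt_sq (by positivity)).symm
  rw [h1, ← Real.sqrt_mul (by positivity)]
  apply Real.sqrt_le_sqrt
  nlinarith [sq_nonneg (a * q - b * p)]

lemma amgm {X p q : ℝ} (hX : 0 ≤ X) (hp : 0 ≤ p) (hq : 0 ≤ q) (h : X ^ 2 ≤ p * q) :
    X ≤ (p + q) / 2 := by
  nlinarith [sq_nonneg (p - q), sq_nonneg (X - (p + q) / 2)]

lemma exists_good_subset {n : ℕ} (v : Fin n → ℂ) (s : ℕ) (hs : s ≤ n) :
    ∃ S : Finset (Fin n), S.card = s ∧ (∀ i ∉ S, ∀ j ∈ S, ‖v i‖ ≤ ‖v j‖) ∧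
      ∀ Z : Finset (Fin n), Z.card ≤ s → ∑ i ∈ Z, ‖v i‖ ≤ ∑ i ∈ S, ‖v i‖ := by
  have hcard : s ≤ (Finset.univ : Finset (Fin n)).card := by simpa using hs
  obtain ⟨S₀, _, hS₀⟩ := Finset.exists_subset_card_eq hcard
  have hne : (Finset.univ.powersetCard s).Nonempty :=
    ⟨S₀, by simpa [Finset.mem_powersetCard_univ] using hS₀⟩
  obtain ⟨S, hSmem, hSmax⟩ := Finset.exists_max_image _ (fun S => ∑ i ∈ S, ‖v i‖) hne
  rw [Finset.mem_powersetCard_univ] at hSmem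
  refine ⟨S, hSmem, ?_, ?_⟩
  · intro i hi j hj
    have hij : i ≠ j := fun h => hi (h ▸ hj)
    set S' := insert i (S.erase j) with hS'
    have hiS' : i ∉ S.erase j := fun h => hi (Finset.mem_of_mem_erase h)
    have hcard' : S'.card = s := by
      rw [hS', Finset.card_insert_of_notMem hiS', Finset.card_erase_of_mem hj, hSmem]
      have : 1 ≤ s := by
        rw [← hSmem]; exact Finset.card_pos.mpr ⟨j, hj⟩
      omega
    have hle := hSmax S' (by rwa [Finset.mem_powersetCard_univ])
    rw [hS', Finset.sum_insert hiS'] at hle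
    have herase : ∑ i ∈ S.erase j, ‖v i‖ + ‖v j‖ = ∑ i ∈ S, ‖v i‖ :=
      Finset.sum_erase_add _ _ hj
    linarith
  · intro Z hZ
    obtain ⟨Z', hZZ', hZ'card⟩ := Finset.exists_superset_card_eq hZ (by simpa using hs)
    calc ∑ i ∈ Z, ‖v i‖ ≤ ∑ i ∈ Z', ‖v i‖ :=
          Finset.sum_le_sum_of_subset_of_nonneg hZZ' fun _ _ _ => norm_nonneg _
      _ ≤ ∑ i ∈ S, ‖v i‖ := hSmax Z' (by rwa [Finset.mem_powersetCard_univ])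

lemma sigma1_ge {n s : ℕ} (x : Fin n → ℂ) (S : Finset (Fin n)) (hcard : S.card = s)
    (hmax : ∀ Z : Finset (Fin n), Z.card ≤ s → ∑ i ∈ Z, ‖x i‖ ≤ ∑ i ∈ S, ‖x i‖) :
    l1norm (restr x Sᶜ) ≤ sigma1 s x := by
  apply le_csInf
  · exact ⟨l1norm x, 0, ⟨∅, by simp, fun _ _ => rfl⟩, by simp⟩
  rintro t ⟨z, ⟨Z, hZcard, hZ⟩, rfl⟩
  have hsplit : l1norm (restr x Sᶜ) = l1norm x - ∑ i ∈ S, ‖x i‖ := by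
    have := l1norm_split x S
    rw [l1norm_restr_eq_sum] at this
    linarith
  have h1 : ∑ i ∈ Zᶜ, ‖x i‖ ≤ l1norm (x - z) := by
    have : ∑ i ∈ Zᶜ, ‖x i‖ = ∑ i ∈ Zᶜ, ‖(x - z) i‖ := by
      refine Finset.sum_congr rfl fun i hi => ?_
      rw [Finset.mem_compl] at hi
      simp [hZ i hi]
    rw [this, l1norm]
    exact Finset.sum_le_sum_of_subset_of_nonneg (Finset.subset_univ _)
      fun _ _ _ => norm_nonneg _
  have h2 : ∑ i ∈ Z, ‖x i‖ + ∑ i ∈ Zᶜ, ‖x i‖ = l1norm x := Finset.sum_add_sum_compl Z _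
  have h3 := hmax Z hZcard
  linarith

lemma stechkin {n s : ℕ} (v : Fin n → ℂ) (S : Finset (Fin n)) (hcard : S.card = s)
    (hs : 1 ≤ s) (hord : ∀ i ∉ S, ∀ j ∈ S, ‖v i‖ ≤ ‖v j‖) :
    l2norm (restr v Sᶜ) ^ 2 * Real.sqrt s ≤ l2norm (restr v S) * l1norm v := by
  have hSne : S.Nonempty := Finset.card_pos.mp (by omega)
  obtain ⟨j₀, hj₀S, hj₀min⟩ := S.exists_min_image (fun j => ‖v j‖) hSne
  have h1 : (s : ℝ) * ‖v j₀‖ ^ 2 ≤ l2norm (restr v S) ^ 2 := by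
    rw [l2norm_restr_sq]
    calc (s : ℝ) * ‖v j₀‖ ^ 2 = ∑ _i ∈ S, ‖v j₀‖ ^ 2 := by
          rw [Finset.sum_const, hcard, nsmul_eq_mul]
      _ ≤ ∑ i ∈ S, ‖v i‖ ^ 2 :=
          Finset.sum_le_sum fun i hi =>
            pow_le_pow_left₀ (norm_nonneg _) (hj₀min i hi) 2
  have h1' : Real.sqrt s * ‖v j₀‖ ≤ l2norm (restr v S) := by
    have h := Real.sqrt_le_sqrt h1
    rwa [Real.sqrt_mul (by positivity), Real.sqrt_sq (norm_nonneg _),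
      Real.sqrt_sq (l2norm_nonneg _)] at h
  have h2 : l2norm (restr v Sᶜ) ^ 2 ≤ ‖v j₀‖ * l1norm v := by
    rw [l2norm_restr_sq]
    calc ∑ i ∈ Sᶜ, ‖v i‖ ^ 2 ≤ ∑ i ∈ Sᶜ, ‖v j₀‖ * ‖v i‖ := by
          refine Finset.sum_le_sum fun i hi => ?_
          rw [Finset.mem_compl] at hi
          have := hord i hi j₀ hj₀S
          nlinarith [norm_nonneg (v i)]
      _ = ‖v j₀‖ * ∑ i ∈ Sᶜ, ‖v i‖ := by rw [Finset.mul_sum]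
      _ ≤ ‖v j₀‖ * l1norm v := by
          refine mul_le_mul_of_nonneg_left ?_ (norm_nonneg _)
          exact Finset.sum_le_sum_of_subset_of_nonneg (Finset.subset_univ _)
            fun _ _ _ => norm_nonneg _
  calc l2norm (restr v Sᶜ) ^ 2 * Real.sqrt s ≤ (‖v j₀‖ * l1norm v) * Real.sqrt s :=
        mul_le_mul_of_nonneg_right h2 (Real.sqrt_nonneg _)
    _ = (Real.sqrt s * ‖v j₀‖) * l1norm v := by ring
    _ ≤ l2norm (restr v S) * l1norm v :=
        mul_le_mul_of_nonneg_right h1' (l1norm_nonneg _)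

lemma restr_neg {n : ℕ} (x : Fin n → ℂ) (S : Finset (Fin n)) :
    restr (-x) S = -restr x S := by
  funext i; by_cases h : i ∈ S <;> simp [restr, h]

lemma l1norm_neg {n : ℕ} (x : Fin n → ℂ) : l1norm (-x) = l1norm x := by
  rw [l1norm, l1norm]; simp

lemma l2norm_sub_le {n : ℕ} (x y : Fin n → ℂ) : l2norm (x - y) ≤ l2norm x + l2norm y := by
  rw [sub_eq_add_neg]
  calc l2norm (x + -y) ≤ l2norm x + l2norm (-y) := l2norm_add_le _ _
    _ = l2norm x + l2norm y := by rw [l2norm_neg]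

lemma sqrt_left_le {p q : ℝ} (hp : 0 ≤ p) : p ≤ Real.sqrt (p ^ 2 + q ^ 2) := by
  calc p = Real.sqrt (p ^ 2) := (Real.sqrt_sq hp).symm
    _ ≤ Real.sqrt (p ^ 2 + q ^ 2) := Real.sqrt_le_sqrt (by nlinarith [sq_nonneg q])

lemma sqrt_right_le {p q : ℝ} (hq : 0 ≤ q) : q ≤ Real.sqrt (p ^ 2 + q ^ 2) := by
  rw [add_comm]; exact sqrt_left_le hq

set_option maxHeartbeats 2000000 in
/-- ℓ² recovery estimate under the ℓ²-robust NSP, with constants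
depending only on ρ and τ. -/
theorem l2_recovery_of_l2RNSP (ρ τ : ℝ) (hρ0 : 0 < ρ) (hρ1 : ρ < 1) (hτ : 0 < τ) :
    ∃ C₃ C₄ : ℝ, 0 < C₃ ∧ 0 < C₄ ∧
      ∀ (N m s k : ℕ), 1 ≤ s → s ≤ N → 1 ≤ k → k ≤ m →
        ∀ lam : ℝ, 0 < lam →
          ∀ A : Matrix (Fin m) (Fin N) ℂ, L2RNSP A s k lam ρ τ →
            ∀ (x : Fin N → ℂ) (c y : Fin m → ℂ) (ε : ℝ), 0 < ε →
              l2norm (A.mulVec x + c - y) ≤ ε →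
              ∀ (xh : Fin N → ℂ) (ch : Fin m → ℂ), IsMinimizer A y lam ε xh ch →
                l2norm (x - xh) + l2norm (c - ch) ≤
                  C₃ * (1 + etaSK s k lam ^ ((1 : ℝ) / 4)) *
                      (sigma1 s x / Real.sqrt (s : ℝ) + sigma1 k c / Real.sqrt (k : ℝ)) +
                    C₄ * (1 + etaSK s k lam ^ ((1 : ℝ) / 4)) * ε := by
  have h1ρ : (0 : ℝ) < 1 - ρ := by linarith
  refine ⟨16 * (1 - ρ)⁻¹, 16 * τ * (1 - ρ)⁻¹, by positivity, by positivity, ?_⟩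
  intro N m s k hs1 hsN hk1 hkm lam hlam A hRNSP x c y ε hε hfeas xh ch hmin
  set β : ℝ := (1 - ρ)⁻¹ with hβdef
  have hβ0 : 0 < β := by positivity
  have hβρ : β * (1 - ρ) = 1 := inv_mul_cancel₀ (ne_of_gt h1ρ)
  have hβ1 : 1 ≤ β := by
    have := mul_nonneg hβ0.le hρ0.le
    linarith only [hβρ, this]
  -- basic positivity
  have hsR : (0 : ℝ) < s := by exact_mod_cast Nat.lt_of_lt_of_le Nat.zero_lt_one hs1
  have hkR : (0 : ℝ) < k := by exact_mod_cast Nat.lt_of_lt_of_le Nat.zero_lt_one hk1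
  set u := x - xh with hu
  set w := c - ch with hw
  set a := Real.sqrt (s : ℝ) with hadef
  set bk := Real.sqrt (k : ℝ) with hbkdef
  set b := lam * bk with hbdef
  set Q := Real.sqrt ((s : ℝ) + lam ^ 2 * k) with hQdef
  have ha : 0 < a := Real.sqrt_pos.mpr hsR
  have hbk : 0 < bk := Real.sqrt_pos.mpr hkR
  have hb : 0 < b := by positivity
  have hQ : 0 < Q := Real.sqrt_pos.mpr (by positivity)
  have ha2 : a ^ 2 = (s : ℝ) := Real.sq_sqrt hsR.le
  have hbk2 : bk ^ 2 = (k : ℝ) := Real.sq_sqrt hkR.le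
  have hb2 : b ^ 2 = lam ^ 2 * k := by rw [hbdef, mul_pow, hbk2]
  have hQ2 : Q ^ 2 = (s : ℝ) + lam ^ 2 * k := Real.sq_sqrt (by positivity)
  have haQ : a ≤ Q := Real.sqrt_le_sqrt
    (by linarith only [mul_nonneg (sq_nonneg lam) hkR.le])
  have hbQ : b ≤ Q := by
    have hb' : b = Real.sqrt (lam ^ 2 * k) := by
      rw [hbdef, hbkdef, Real.sqrt_mul (sq_nonneg lam), Real.sqrt_sq hlam.le]
    rw [hb']
    exact Real.sqrt_le_sqrt (by linarith only [hsR])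
  -- eta facts
  set μ : ℝ := min (s : ℝ) (lam ^ 2 * k) with hμdef
  have hμ : 0 < μ := lt_min hsR (by positivity)
  have hηQ : etaSK s k lam = Q ^ 2 / μ := by rw [etaSK, hQ2, hμdef]
  have hη1 : 1 ≤ etaSK s k lam := by
    rw [hηQ]
    rw [one_le_div hμ]
    calc μ ≤ (s : ℝ) := min_le_left _ _
      _ ≤ (s : ℝ) + lam ^ 2 * k := by
          linarith only [mul_nonneg (sq_nonneg lam) hkR.le]
      _ = Q ^ 2 := hQ2.symm
  have hη0 : 0 < etaSK s k lam := lt_of_lt_of_le one_pos hη1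
  set t := etaSK s k lam ^ ((1 : ℝ) / 4) with htdef
  have ht1 : 1 ≤ t := Real.one_le_rpow hη1 (by norm_num)
  have ht0 : 0 < t := lt_of_lt_of_le one_pos ht1
  have ht2 : t ^ 2 = Real.sqrt (etaSK s k lam) := by
    rw [htdef, sq, ← Real.rpow_add hη0, Real.sqrt_eq_rpow]
    norm_num
  have hμs : Real.sqrt μ ≤ a := Real.sqrt_le_sqrt (min_le_left _ _)
  have hμb : Real.sqrt μ ≤ b := by
    have hb' : b = Real.sqrt (lam ^ 2 * k) := by
      rw [hbdef, hbkdef, Real.sqrt_mul (sq_nonneg lam), Real.sqrt_sq hlam.le]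
    rw [hb']
    exact Real.sqrt_le_sqrt (min_le_right _ _)
  have hQημ : Real.sqrt (etaSK s k lam) * Real.sqrt μ = Q := by
    rw [← Real.sqrt_mul hη0.le, hηQ, div_mul_cancel₀ _ (ne_of_gt hμ), Real.sqrt_sq hQ.le]
  have hQta : Q ≤ t ^ 2 * a := by
    rw [ht2, ← hQημ]
    exact mul_le_mul_of_nonneg_left hμs (Real.sqrt_nonneg _)
  have hQtb : Q ≤ t ^ 2 * b := by
    rw [ht2, ← hQημ]
    exact mul_le_mul_of_nonneg_left hμb (Real.sqrt_nonneg _)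
  -- residual bound
  have hAuw : l2norm (A.mulVec u + w) ≤ 2 * ε := by
    have heq : A.mulVec u + w = (A.mulVec x + c - y) - (A.mulVec xh + ch - y) := by
      rw [hu, hw, Matrix.mulVec_sub]
      abel
    rw [heq]
    have := l2norm_sub_le (A.mulVec x + c - y) (A.mulVec xh + ch - y)
    have h2 := hmin.1
    linarith only [this, h2, hfeas]
  -- choose index sets
  obtain ⟨S, hScard, hSord, hSmax⟩ := exists_good_subset x s hsN
  obtain ⟨T, hTcard, hTord, hTmax⟩ := exists_good_subset c k hkm
  obtain ⟨S₀, hS₀card, hS₀ord, hS₀max⟩ := exists_good_subset u s hsN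
  obtain ⟨T₀, hT₀card, hT₀ord, hT₀max⟩ := exists_good_subset w k hkm
  have hσx : l1norm (restr x Sᶜ) ≤ sigma1 s x := sigma1_ge x S hScard hSmax
  have hσc : l1norm (restr c Tᶜ) ≤ sigma1 k c := sigma1_ge c T hTcard hTmax
  set r₁ := sigma1 s x / a with hr₁def
  set r₂ := sigma1 k c / bk with hr₂def
  have hσx0 : 0 ≤ sigma1 s x := le_trans (l1norm_nonneg _) hσx
  have hσc0 : 0 ≤ sigma1 k c := le_trans (l1norm_nonneg _) hσc
  have hr₁ : 0 ≤ r₁ := div_nonneg hσx0 ha.le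
  have hr₂ : 0 ≤ r₂ := div_nonneg hσc0 hbk.le
  have hr₁a : sigma1 s x = r₁ * a := (div_mul_cancel₀ _ (ne_of_gt ha)).symm
  have hr₂b : lam * sigma1 k c = r₂ * b := by
    rw [hr₂def, hbdef]
    field_simp
  -- cone condition from minimality
  have hcone : l1norm (restr u Sᶜ) + lam * l1norm (restr w Tᶜ) ≤
      l1norm (restr u S) + lam * l1norm (restr w T) +
        2 * sigma1 s x + 2 * (lam * sigma1 k c) := by
    have hminl := hmin.2 x c hfeas
    have e1 : l1norm (restr x S) ≤ l1norm (restr xh S) + l1norm (restr u S) := by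
      have hxe : restr x S = restr xh S + restr u S := by
        funext i
        by_cases h : i ∈ S
        · simp only [restr, h, if_true, Pi.add_apply, hu, Pi.sub_apply]
          ring
        · simp [restr, h]
      rw [hxe]; exact l1norm_add_le _ _
    have e2 : l1norm (restr u Sᶜ) ≤ l1norm (restr x Sᶜ) + l1norm (restr xh Sᶜ) := by
      have hxe : restr u Sᶜ = restr x Sᶜ + restr (-xh) Sᶜ := by
        funext i
        by_cases h : i ∈ Sᶜ
        · simp only [restr, h, if_true, Pi.add_apply, hu, Pi.sub_apply, Pi.neg_apply]
          ring
        · simp [restr, h]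
      rw [hxe]
      refine le_trans (l1norm_add_le _ _) (le_of_eq ?_)
      rw [restr_neg, l1norm_neg]
    have f1 : l1norm (restr c T) ≤ l1norm (restr ch T) + l1norm (restr w T) := by
      have hce : restr c T = restr ch T + restr w T := by
        funext i
        by_cases h : i ∈ T
        · simp only [restr, h, if_true, Pi.add_apply, hw, Pi.sub_apply]
          ring
        · simp [restr, h]
      rw [hce]; exact l1norm_add_le _ _
    have f2 : l1norm (restr w Tᶜ) ≤ l1norm (restr c Tᶜ) + l1norm (restr ch Tᶜ) := by
      have hce : restr w Tᶜ = restr c Tᶜ + restr (-ch) Tᶜ := by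
        funext i
        by_cases h : i ∈ Tᶜ
        · simp only [restr, h, if_true, Pi.add_apply, hw, Pi.sub_apply, Pi.neg_apply]
          ring
        · simp [restr, h]
      rw [hce]
      refine le_trans (l1norm_add_le _ _) (le_of_eq ?_)
      rw [restr_neg, l1norm_neg]
    have sx := l1norm_split x S
    have sxh := l1norm_split xh S
    have sc := l1norm_split c T
    have sch := l1norm_split ch T
    have f1' := mul_le_mul_of_nonneg_left f1 hlam.le
    have f2' := mul_le_mul_of_nonneg_left f2 hlam.le
    have hσc' := mul_le_mul_of_nonneg_left hσc hlam.le
    have sc' : lam * l1norm (restr c T) + lam * l1norm (restr c Tᶜ) = lam * l1norm c := by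
      rw [← sc]; ring
    have sch' : lam * l1norm (restr ch T) + lam * l1norm (restr ch Tᶜ) = lam * l1norm ch := by
      rw [← sch]; ring
    rw [mul_add] at f1' f2'
    linarith only [hminl, e1, e2, f1', f2', sx, sxh, sc', sch', hσx, hσc',
      l1norm_nonneg (restr ch Tᶜ), l1norm_nonneg (restr xh Sᶜ),
      mul_nonneg hlam.le (l1norm_nonneg (restr ch Tᶜ))]
  -- l1 head bound via RNSP at (S, T)
  have hhead : l1norm (restr u S) + lam * l1norm (restr w T) ≤
      ρ * (l1norm (restr u Sᶜ) + lam * l1norm (restr w Tᶜ)) + 2 * τ * Q * ε := by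
    have hrnsp1 := hRNSP u w S T (le_of_eq hScard) (le_of_eq hTcard)
    rw [← hQdef] at hrnsp1
    have c1 : l1norm (restr u S) ≤ a * l2norm (restr u S) := by
      have h := l1norm_le_sqrt_card_mul u S
      rwa [hScard, ← hadef] at h
    have c2 : l1norm (restr w T) ≤ bk * l2norm (restr w T) := by
      have h := l1norm_le_sqrt_card_mul w T
      rwa [hTcard, ← hbkdef] at h
    have c2' : lam * l1norm (restr w T) ≤ b * l2norm (restr w T) := by
      rw [hbdef, mul_assoc]
      exact mul_le_mul_of_nonneg_left c2 hlam.le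
    have c3 : a * l2norm (restr u S) + b * l2norm (restr w T) ≤
        Q * Real.sqrt (l2norm (restr u S) ^ 2 + l2norm (restr w T) ^ 2) := by
      have h := cs2 ha.le hb.le (l2norm_nonneg (restr u S)) (l2norm_nonneg (restr w T))
      have heq : a ^ 2 + b ^ 2 = (s : ℝ) + lam ^ 2 * k := by rw [ha2, hb2]
      rwa [heq, ← hQdef] at h
    have c4 : Q * Real.sqrt (l2norm (restr u S) ^ 2 + l2norm (restr w T) ^ 2) ≤
        Q * ((ρ / Q) * (l1norm (restr u Sᶜ) + lam * l1norm (restr w Tᶜ)) + τ * (2 * ε)) := by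
      refine mul_le_mul_of_nonneg_left ?_ hQ.le
      refine le_trans hrnsp1 ?_
      exact add_le_add le_rfl (mul_le_mul_of_nonneg_left hAuw hτ.le)
    have c5 : Q * ((ρ / Q) * (l1norm (restr u Sᶜ) + lam * l1norm (restr w Tᶜ)) + τ * (2 * ε)) =
        ρ * (l1norm (restr u Sᶜ) + lam * l1norm (restr w Tᶜ)) + 2 * τ * Q * ε := by
      field_simp
    linarith only [c1, c2', c3, c4, c5]
  -- the full l1 bound
  set P := l1norm u + lam * l1norm w with hPdef
  have hluw : 0 ≤ l1norm u := l1norm_nonneg u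
  have hlww : 0 ≤ l1norm w := l1norm_nonneg w
  have hP0 : 0 ≤ P := by positivity
  have hPsplit : P = (l1norm (restr u S) + lam * l1norm (restr w T)) +
      (l1norm (restr u Sᶜ) + lam * l1norm (restr w Tᶜ)) := by
    rw [hPdef, ← l1norm_split u S, ← l1norm_split w T]
    ring
  have hPbound : P * (1 - ρ) ≤ 6 * (r₁ * a + r₂ * b) + 4 * τ * Q * ε := by
    set hd := l1norm (restr u S) + lam * l1norm (restr w T) with hhd
    set tl := l1norm (restr u Sᶜ) + lam * l1norm (restr w Tᶜ) with htl
    have hd0 : 0 ≤ hd := by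
      have := l1norm_nonneg (restr u S)
      have := l1norm_nonneg (restr w T)
      positivity
    have tl0 : 0 ≤ tl := by
      have := l1norm_nonneg (restr u Sᶜ)
      have := l1norm_nonneg (restr w Tᶜ)
      positivity
    have hσsum : 0 ≤ 2 * sigma1 s x + 2 * (lam * sigma1 k c) := by positivity
    -- hd ≤ ρ * tl + 2τQε ; tl ≤ hd + 2σ
    have hρcone := mul_le_mul_of_nonneg_left hcone hρ0.le
    have p1 : 0 ≤ (1 - ρ) * sigma1 s x := mul_nonneg h1ρ.le hσx0
    have p2 : 0 ≤ (1 - ρ) * (lam * sigma1 k c) :=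
      mul_nonneg h1ρ.le (mul_nonneg hlam.le hσc0)
    have k1 : hd * (1 - ρ) ≤ 2 * sigma1 s x + 2 * (lam * sigma1 k c) + 2 * τ * Q * ε := by
      linarith only [hhead, hρcone, p1, p2]
    have hconeρ := mul_le_mul_of_nonneg_right hcone h1ρ.le
    have p3 : 0 ≤ ρ * sigma1 s x := mul_nonneg hρ0.le hσx0
    have p4 : 0 ≤ ρ * (lam * sigma1 k c) := mul_nonneg hρ0.le (mul_nonneg hlam.le hσc0)
    have k2 : tl * (1 - ρ) ≤ hd * (1 - ρ) +
        (2 * sigma1 s x + 2 * (lam * sigma1 k c)) := by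
      linarith only [hconeρ, p3, p4]
    have hrw : 2 * sigma1 s x + 2 * (lam * sigma1 k c) = 2 * (r₁ * a) + 2 * (r₂ * b) := by
      rw [← hr₁a, ← hr₂b]
    rw [hPsplit]
    linarith only [k1, k2, hrw]
  -- l2 step via RNSP at (S₀, T₀)
  set K := Real.sqrt (l2norm (restr u S₀) ^ 2 + l2norm (restr w T₀) ^ 2) with hKdef
  have hK0 : 0 ≤ K := Real.sqrt_nonneg _
  have hluP : l1norm u ≤ P := by
    have := mul_nonneg hlam.le hlww
    linarith only [hPdef, this]
  have hlwP : lam * l1norm w ≤ P := by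
    linarith only [hPdef, hluw]
  have hKQ : K ≤ P / Q + 2 * τ * ε := by
    have hrnsp2 := hRNSP u w S₀ T₀ (le_of_eq hS₀card) (le_of_eq hT₀card)
    rw [← hQdef, ← hKdef] at hrnsp2
    have tail0 : l1norm (restr u S₀ᶜ) + lam * l1norm (restr w T₀ᶜ) ≤ P := by
      have g1 := l1norm_restr_le u S₀ᶜ
      have g2 := mul_le_mul_of_nonneg_left (l1norm_restr_le w T₀ᶜ) hlam.le
      rw [hPdef]; linarith
    have tail0' : 0 ≤ l1norm (restr u S₀ᶜ) + lam * l1norm (restr w T₀ᶜ) := by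
      have := l1norm_nonneg (restr u S₀ᶜ)
      have := l1norm_nonneg (restr w T₀ᶜ)
      positivity
    have step1 : (ρ / Q) * (l1norm (restr u S₀ᶜ) + lam * l1norm (restr w T₀ᶜ)) ≤ P / Q := by
      rw [div_mul_eq_mul_div, div_le_div_iff₀ hQ hQ]
      have h1 : ρ * (l1norm (restr u S₀ᶜ) + lam * l1norm (restr w T₀ᶜ)) ≤ P := by
        have := mul_le_mul_of_nonneg_right hρ1.le tail0'
        linarith only [this, tail0]
      have := mul_le_mul_of_nonneg_right h1 hQ.le
      linarith only [this]
    have step2 : τ * l2norm (A.mulVec u + w) ≤ 2 * τ * ε := by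
      have := mul_le_mul_of_nonneg_left hAuw hτ.le
      linarith only [this]
    linarith only [hrnsp2, step1, step2]
  have huK : l2norm (restr u S₀) ≤ K := sqrt_left_le (l2norm_nonneg _)
  have hwK : l2norm (restr w T₀) ≤ K := sqrt_right_le (l2norm_nonneg _)
  set X := l2norm (restr u S₀ᶜ) with hXdef
  set Y := l2norm (restr w T₀ᶜ) with hYdef
  have hX0 : 0 ≤ X := l2norm_nonneg _
  have hY0 : 0 ≤ Y := l2norm_nonneg _
  have hXa : X ^ 2 * a ≤ K * P := by
    have st := stechkin u S₀ hS₀card hs1 hS₀ord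
    rw [← hadef, ← hXdef] at st
    calc X ^ 2 * a ≤ l2norm (restr u S₀) * l1norm u := st
      _ ≤ K * P := mul_le_mul huK hluP (l1norm_nonneg _) hK0
  have hYb : Y ^ 2 * b ≤ K * P := by
    have st := stechkin w T₀ hT₀card hk1 hT₀ord
    rw [← hbkdef, ← hYdef] at st
    have st' := mul_le_mul_of_nonneg_left st hlam.le
    calc Y ^ 2 * b = lam * (Y ^ 2 * bk) := by rw [hbdef]; ring
      _ ≤ lam * (l2norm (restr w T₀) * l1norm w) := st'
      _ = l2norm (restr w T₀) * (lam * l1norm w) := by ring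
      _ ≤ K * P := mul_le_mul hwK hlwP (by positivity) hK0
  have hta : 0 < t * a := by positivity
  have htb : 0 < t * b := by positivity
  have hX : X ≤ (t * K + P / (t * a)) / 2 := by
    refine amgm hX0 (by positivity) (by positivity) ?_
    have heq : (t * K) * (P / (t * a)) = K * P / a := by
      field_simp
    rw [heq, le_div_iff₀ ha]
    exact hXa
  have hY : Y ≤ (t * K + P / (t * b)) / 2 := by
    refine amgm hY0 (by positivity) (by positivity) ?_
    have heq : (t * K) * (P / (t * b)) = K * P / b := by
      field_simp
    rw [heq, le_div_iff₀ hb]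
    exact hYb
  have hPta : P / (t * a) ≤ t * (P / Q) := by
    rw [div_le_iff₀ hta]
    have heq : t * (P / Q) * (t * a) = P * (t ^ 2 * a) / Q := by
      field_simp
    rw [heq, le_div_iff₀ hQ]
    have := mul_le_mul_of_nonneg_left hQta hP0
    linarith only [this]
  have hPtb : P / (t * b) ≤ t * (P / Q) := by
    rw [div_le_iff₀ htb]
    have heq : t * (P / Q) * (t * b) = P * (t ^ 2 * b) / Q := by
      field_simp
    rw [heq, le_div_iff₀ hQ]
    have := mul_le_mul_of_nonneg_left hQtb hP0
    linarith only [this]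
  -- bound P/Q
  set G := (6 * (r₁ + r₂) + 4 * τ * ε) * β with hGdef
  have hG0 : 0 ≤ G := by positivity
  have hPG : P ≤ G * Q := by
    have step1 : P * (1 - ρ) ≤ (6 * (r₁ + r₂) + 4 * τ * ε) * Q := by
      have g1 := mul_le_mul_of_nonneg_left haQ hr₁
      have g2 := mul_le_mul_of_nonneg_left hbQ hr₂
      linarith only [hPbound, g1, g2]
    have step2 := mul_le_mul_of_nonneg_right step1 hβ0.le
    calc P = P * (1 - ρ) * β := by rw [mul_assoc, mul_comm (1-ρ) β, hβρ, mul_one]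
      _ ≤ (6 * (r₁ + r₂) + 4 * τ * ε) * Q * β := step2
      _ = G * Q := by rw [hGdef]; ring
  have hPQG : P / Q ≤ G := (div_le_iff₀ hQ).mpr hPG
  have hKG : K ≤ G + 2 * τ * ε := by linarith only [hKQ, hPQG]
  have htK : t * K ≤ t * (G + 2 * τ * ε) := mul_le_mul_of_nonneg_left hKG ht0.le
  have htD : t * (P / Q) ≤ t * G := mul_le_mul_of_nonneg_left hPQG ht0.le
  -- combine
  have hUu : l2norm u ≤ K + X := by
    have := l2norm_le_split u S₀
    rw [← hXdef] at this
    linarith only [this, huK]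
  have hUw : l2norm w ≤ K + Y := by
    have := l2norm_le_split w T₀
    rw [← hYdef] at this
    linarith only [this, hwK]
  have hfinal : l2norm u + l2norm w ≤ 2 * G + 4 * τ * ε + 2 * (t * G) + 2 * (t * (τ * ε)) := by
    have e1 : X ≤ (t * (G + 2 * τ * ε) + t * G) / 2 := by
      linarith only [hX, htK, hPta, htD]
    have e2 : Y ≤ (t * (G + 2 * τ * ε) + t * G) / 2 := by
      linarith only [hY, htK, hPtb, htD]
    have expand : t * (G + 2 * τ * ε) = t * G + 2 * (t * (τ * ε)) := by ring
    rw [expand] at e1 e2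
    linarith only [hUu, hUw, e1, e2, hKG]
  -- final arithmetic
  have hτε : 0 < τ * ε := mul_pos hτ hε
  have hkey : (4 : ℝ) + 2 * t ≤ 8 * (β * (1 + t)) := by
    have h8 : 0 ≤ (β - 1) * (8 * (1 + t)) :=
      mul_nonneg (by linarith only [hβ1]) (by linarith only [ht1])
    linarith only [h8, ht1]
  have hkey2 : ((4 : ℝ) + 2 * t) * (τ * ε) ≤ 8 * (β * (1 + t)) * (τ * ε) :=
    mul_le_mul_of_nonneg_right hkey hτε.le
  have hGexp : 2 * G + 2 * (t * G) = 12 * (β * (1 + t)) * (r₁ + r₂) +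
      8 * (β * (1 + t)) * (τ * ε) := by
    rw [hGdef]; ring
  have hR0 : 0 ≤ r₁ + r₂ := by linarith
  have hB0 : 0 ≤ β * (1 + t) := by positivity
  have hBR : 0 ≤ β * (1 + t) * (r₁ + r₂) := mul_nonneg hB0 hR0
  calc l2norm u + l2norm w ≤ 2 * G + 4 * τ * ε + 2 * (t * G) + 2 * (t * (τ * ε)) := hfinal
    _ = (2 * G + 2 * (t * G)) + (4 + 2 * t) * (τ * ε) := by ring
    _ ≤ 12 * (β * (1 + t)) * (r₁ + r₂) + 8 * (β * (1 + t)) * (τ * ε) +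
        8 * (β * (1 + t)) * (τ * ε) := by rw [hGexp]; linarith only [hkey2]
    _ ≤ 16 * β * (1 + t) * (r₁ + r₂) + 16 * τ * β * (1 + t) * ε := by
        linarith only [hBR]
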